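/- An ideal I on ω is weakly Ramsey if and only if for every partition (X_n)_{n∈ω} of ω into sets belonging to I there exists an increasing function f: ω → ω with I-positive range and such that f(n+1) ∈ ∪_{i > f(n)} X_i for each n ∈ ω. -/

import Mathlib

open Set

/-- `I` is an ideal on `α`: closed under subsets and finite unions,
contains all finite sets, and is not all of `P(α)`. -/
def IsIdealOn {α : Type*} (I : Set (Set α)) : Prop :=
  (∀ A ∈ I, ∀ B : Set α, B ⊆ A → B ∈ I) ∧
  (∀ A ∈ I, ∀ B ∈ I, A ∪ B ∈ I) ∧
  (∀ A : Set α, A.Finite → A ∈ I) ∧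
  (Set.univ : Set α) ∉ I

/-- Generator of the first type of `WR`: a vertical line. -/
def WRgen1 (S : Set (ℕ × ℕ)) : Prop := ∃ i, S = {p : ℕ × ℕ | p.1 = i}

/-- Generator of the second type of `WR`. -/
def WRgen2 (S : Set (ℕ × ℕ)) : Prop :=
  ∀ p ∈ S, ∀ q ∈ S, p ≠ q → p.1 > q.1 + q.2 ∨ q.1 > p.1 + p.2

/-- The ideal `WR`: sets covered by finitely many generators. -/
def WR : Set (Set (ℕ × ℕ)) :=
  {A | ∃ C : Finset (Set (ℕ × ℕ)), (∀ S ∈ C, WRgen1 S ∨ WRgen2 S) ∧ A ⊆ ⋃₀ ↑C}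

/-- Generator of `ED↑`: a vertical line or the graph of a nondecreasing function. -/
def EDgen (S : Set (ℕ × ℕ)) : Prop :=
  (∃ i, S = {p : ℕ × ℕ | p.1 = i}) ∨
  (∃ f : ℕ → ℕ, Monotone f ∧ S = {p : ℕ × ℕ | p.2 = f p.1})

/-- The ideal `ED↑`. -/
def EDup : Set (Set (ℕ × ℕ)) :=
  {A | ∃ C : Finset (Set (ℕ × ℕ)), (∀ S ∈ C, EDgen S) ∧ A ⊆ ⋃₀ ↑C}

/-- A tree of finite sequences: closed under taking prefixes. -/
def IsTree {α : Type*} (T : Set (List α)) : Prop :=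
  ∀ s ∈ T, ∀ t : List α, t <+: s → t ∈ T

/-- `I` is weakly Ramsey: every (nonempty) tree all of whose ramifications
belong to the dual filter `I*` has a branch with `I`-positive range. -/
def WeaklyRamsey {α : Type*} (I : Set (Set α)) : Prop :=
  ∀ T : Set (List α), ([] : List α) ∈ T → IsTree T →
    (∀ s ∈ T, {x : α | s ++ [x] ∈ T}ᶜ ∈ I) →
    ∃ b : ℕ → α, (∀ k, (List.range k).map b ∈ T) ∧ Set.range b ∉ I

/-- `(X n)` is a partition of `α`. -/
def IsPartition {α : Type*} (X : ℕ → Set α) : Prop :=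
  (∀ m n, m ≠ n → Disjoint (X m) (X n)) ∧ (⋃ n, X n) = Set.univ

/-- `S` is a selector: it meets each piece in at most one point. -/
def IsSelector {α : Type*} (X : ℕ → Set α) (S : Set α) : Prop :=
  ∀ n, (S ∩ X n).Subsingleton

/-- Locally selective: every partition into sets from `I` has an `I`-positive selector. -/
def LocallySelective {α : Type*} (I : Set (Set α)) : Prop :=
  ∀ X : ℕ → Set α, IsPartition X → (∀ n, X n ∈ I) →
    ∃ S : Set α, IsSelector X S ∧ S ∉ I

/-- Weakly selective. -/
def WeaklySelective {α : Type*} (I : Set (Set α)) : Prop :=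
  ∀ X : ℕ → Set α, IsPartition X → {n | X n ∉ I}.Subsingleton →
    (∀ n, (⋃ m, ⋃ _ : n ≤ m, X m) ∉ I) →
    ∃ S : Set α, IsSelector X S ∧ S ∉ I


section Aux

lemma ideal_biUnion {I : Set (Set ℕ)} (hI : IsIdealOn I) {β : Type*} {F : Set β} (hF : F.Finite)
    (g : β → Set ℕ) (hg : ∀ s ∈ F, g s ∈ I) : (⋃ s ∈ F, g s) ∈ I := by
  refine Set.Finite.induction_on (motive := fun F _ => (∀ s ∈ F, g s ∈ I) → (⋃ s ∈ F, g s) ∈ I)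
    F hF ?_ ?_ hg
  · intro _; simpa using hI.2.2.1 ∅ Set.finite_empty
  · intro a F' _ _ ih hg'
    rw [Set.biUnion_insert]
    exact hI.2.1 _ (hg' _ (Set.mem_insert _ _)) _
      (ih fun s hs => hg' s (Set.mem_insert_of_mem _ hs))

lemma finite_boundedLists (n : ℕ) : {s : List ℕ | s.length ≤ n + 1 ∧ ∀ x ∈ s, x ≤ n}.Finite := by
  have h1 : {l : List (Fin (n+1)) | l.length ≤ n+1}.Finite := List.finite_length_le _ _
  refine (h1.image (List.map Fin.val)).subset ?_
  rintro s ⟨hlen, hmem⟩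
  refine ⟨s.pmap (fun x h => (⟨x, h⟩ : Fin (n+1))) (fun x hx => Nat.lt_succ_of_le (hmem x hx)), ?_, ?_⟩
  · simpa using hlen
  · simp [List.map_pmap]

end Aux

theorem weaklyRamsey_iff_partition (I : Set (Set ℕ)) (hI : IsIdealOn I) :
    WeaklyRamsey I ↔
    ∀ X : ℕ → Set ℕ, IsPartition X → (∀ n, X n ∈ I) →
      ∃ f : ℕ → ℕ, StrictMono f ∧ Set.range f ∉ I ∧
        ∀ n, f (n + 1) ∈ ⋃ i, ⋃ _ : f n < i, X i := by
  obtain ⟨hsub, hun, hfin, huniv⟩ := hI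
  constructor
  · -- forward direction
    intro hWR X hX hXI
    set R : ℕ → ℕ → Prop := fun a x => a < x ∧ x ∈ ⋃ i, ⋃ _ : a < i, X i with hR
    set T : Set (List ℕ) := {s | List.Chain' R s} with hT
    have h1 : ([] : List ℕ) ∈ T := show List.Chain' R [] from List.isChain_nil
    have h2 : IsTree T := by
      intro s hs t ht
      obtain ⟨u, rfl⟩ := ht
      exact (List.isChain_append.mp hs).1
    have h3 : ∀ s ∈ T, {x : ℕ | s ++ [x] ∈ T}ᶜ ∈ I := by
      intro s hs
      rcases eq_or_ne s [] with rfl | hne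
      · have he : {x : ℕ | [] ++ [x] ∈ T}ᶜ = ∅ := by
          ext x; simp [hT]; exact List.isChain_singleton x
        rw [he]; exact hfin _ Set.finite_empty
      · set m := s.getLast hne with hm
        have hsub2 : {x : ℕ | s ++ [x] ∈ T}ᶜ ⊆ Set.Iic m ∪ ⋃ i ∈ Set.Iic m, X i := by
          intro x hx
          have hx' : ¬ List.Chain' R (s ++ [x]) := hx
          have hRmx : ¬ R m x := by
            intro hRx
            apply hx'
            show List.IsChain R (s ++ [x]); rw [List.isChain_append]
            refine ⟨hs, List.isChain_singleton x, ?_⟩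
            intro a ha y hy
            rw [List.getLast?_eq_getLast hne] at ha
            simp at ha hy
            subst hy
            rw [← ha]; exact hRx
          have hRmx' : ¬ (m < x ∧ x ∈ ⋃ i, ⋃ _ : m < i, X i) := hRmx
          push_neg at hRmx'
          by_cases hmx : m < x
          · right
            have hxu : x ∈ ⋃ n, X n := by rw [hX.2]; trivial
            obtain ⟨j, hj⟩ := Set.mem_iUnion.mp hxu
            have hjm : j ≤ m := by
              by_contra hjc
              exact (hRmx' hmx) (Set.mem_iUnion.mpr ⟨j, Set.mem_iUnion.mpr ⟨by omega, hj⟩⟩)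
            exact Set.mem_biUnion hjm hj
          · left; exact Nat.le_of_not_lt hmx
        apply hsub _ ?_ _ hsub2
        exact hun _ (hfin _ (Set.finite_Iic m)) _
          (ideal_biUnion ⟨hsub, hun, hfin, huniv⟩ (Set.finite_Iic m) _ fun i _ => hXI i)
    obtain ⟨b, hb, hbI⟩ := hWR T h1 h2 h3
    have hstep : ∀ n, R (b n) (b (n + 1)) := by
      intro n
      have hc : List.Chain' R (List.map b (List.range (n + 2))) := hb (n + 2)
      change List.IsChain R _ at hc; rw [List.isChain_map] at hc
      exact (List.isChain_range_succ _ (n + 1)).mp hc n (by omega)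
    exact ⟨b, strictMono_nat_of_lt_succ fun n => (hstep n).1, hbI, fun n => (hstep n).2⟩
  · -- backward direction
    intro hP T hnil htree hram
    classical
    set Fn : ℕ → Set (List ℕ) := fun n => {s | s ∈ T ∧ s.length ≤ n + 1 ∧ ∀ x ∈ s, x ≤ n} with hFn
    set E : ℕ → Set ℕ := fun n => ⋂ s ∈ Fn n, {x | s ++ [x] ∈ T} with hE
    have hFfin : ∀ n, (Fn n).Finite := fun n =>
      (finite_boundedLists n).subset fun s hs => ⟨hs.2.1, hs.2.2⟩
    have hEc : ∀ n, (E n)ᶜ ∈ I := by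
      intro n
      have hcc : (E n)ᶜ = ⋃ s ∈ Fn n, {x | s ++ [x] ∈ T}ᶜ := by
        rw [hE]; rw [Set.compl_iInter₂]
      rw [hcc]
      exact ideal_biUnion ⟨hsub, hun, hfin, huniv⟩ (hFfin n) _ fun s hs => hram s hs.1
    have hext : ∀ n, ∀ s ∈ T, s.length ≤ n + 1 → (∀ x ∈ s, x ≤ n) →
        ∀ y ∈ E n, s ++ [y] ∈ T := by
      intro n s hs hl hbd y hy
      exact Set.mem_iInter₂.mp hy s ⟨hs, hl, hbd⟩
    by_cases hK : (⋂ n, E n) ∈ I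
    · -- K small: build a partition
      have hKE : ∀ x, x ∉ (⋂ n, E n) → x ∈ E 0 → ∃ n, x ∉ E n := by
        intro x hx hx0
        by_contra hc
        push_neg at hc
        exact hx (Set.mem_iInter.mpr hc)
      set d : ℕ → ℕ := fun x =>
        if h : x ∈ (⋂ n, E n) ∨ x ∉ E 0 then 0
        else Nat.find (hKE x (not_or.mp h).1 (not_not.mp (not_or.mp h).2)) with hd
      set Y : ℕ → Set ℕ := fun n => {x | d x = n} with hY
      have hYpart : IsPartition Y := by
        constructor
        · intro m n hmn
          rw [Set.disjoint_left]
          intro x hxm hxn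
          exact hmn (hxm.symm.trans hxn)
        · ext x; simp only [Set.mem_iUnion, Set.mem_univ, iff_true]
          exact ⟨d x, rfl⟩
      have hYI : ∀ n, Y n ∈ I := by
        intro n
        match n with
        | 0 =>
          apply hsub _ (hun _ hK _ (hEc 0))
          intro x hx
          by_cases h : x ∈ (⋂ n, E n) ∨ x ∉ E 0
          · rcases h with h | h
            · exact Or.inl h
            · exact Or.inr h
          · right
            have hx0 : d x = 0 := hx
            rw [hd] at hx0
            simp only [h, dite_false] at hx0
            have := Nat.find_spec (hKE x (not_or.mp h).1 (not_not.mp (not_or.mp h).2))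
            rwa [hx0] at this
        | n + 1 =>
          apply hsub _ (hEc (n + 1))
          intro x hx
          have hx0 : d x = n + 1 := hx
          rw [hd] at hx0
          by_cases h : x ∈ (⋂ n, E n) ∨ x ∉ E 0
          · simp only [h, dite_true] at hx0; omega
          · simp only [h, dite_false] at hx0
            have := Nat.find_spec (hKE x (not_or.mp h).1 (not_not.mp (not_or.mp h).2))
            rwa [hx0] at this
      have hkey : ∀ m i x, m < i → x ∈ Y i → x ∈ E m := by
        intro m i x hmi hx
        have hx0 : d x = i := hx
        rw [hd] at hx0
        by_cases h : x ∈ (⋂ n, E n) ∨ x ∉ E 0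
        · simp only [h, dite_true] at hx0; omega
        · simp only [h, dite_false] at hx0
          have hmin := Nat.find_min (hKE x (not_or.mp h).1 (not_not.mp (not_or.mp h).2))
            (show m < _ by rw [hx0]; exact hmi)
          exact not_not.mp hmin
      obtain ⟨f, hmono, hrI, hstep⟩ := hP Y hYpart hYI
      have hfk : ∀ n, f (n + 1) ∈ E (f n) := by
        intro n
        have := hstep n
        simp only [Set.mem_iUnion] at this
        obtain ⟨i, hi, hx⟩ := this
        exact hkey _ _ _ hi hx
      set b : ℕ → ℕ := fun k => f (k + 1) with hb
      have hpre : ∀ k, (List.range k).map b ∈ T := by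
        intro k
        induction k with
        | zero => simpa using hnil
        | succ k ih =>
          rw [List.range_succ, List.map_append]
          apply hext (f k) _ ih
          · simp only [List.length_map, List.length_range]
            have : k ≤ f k := hmono.le_apply
            omega
          · intro x hx
            simp only [List.mem_map, List.mem_range] at hx
            obtain ⟨i, hi, rfl⟩ := hx
            exact hmono.monotone (by omega : i + 1 ≤ k)
          · exact hfk k
      refine ⟨b, hpre, ?_⟩
      intro hbI
      apply hrI
      apply hsub _ (hun _ hbI _ (hfin _ (Set.finite_singleton (f 0))))
      rintro _ ⟨m, rfl⟩
      match m with
      | 0 => exact Or.inr rfl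
      | m + 1 => exact Or.inl ⟨m, rfl⟩
    · -- K large: enumerate it
      have hKinf : {x | x ∈ ⋂ n, E n}.Infinite := by
        intro hf
        exact hK (hfin _ hf)
      set b : ℕ → ℕ := Nat.nth (· ∈ ⋂ n, E n) with hb
      have hbK : ∀ k, b k ∈ ⋂ n, E n := fun k => Nat.nth_mem_of_infinite hKinf k
      have hrange : Set.range b = ⋂ n, E n := Nat.range_nth_of_infinite hKinf
      have hpre : ∀ k, (List.range k).map b ∈ T := by
        intro k
        induction k with
        | zero => simpa using hnil
        | succ k ih =>
          rw [List.range_succ, List.map_append]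
          set n := max k ((Finset.range k).sup b) with hn
          apply hext n _ ih
          · simp only [List.length_map, List.length_range]
            omega
          · intro x hx
            simp only [List.mem_map, List.mem_range] at hx
            obtain ⟨i, hi, rfl⟩ := hx
            calc b i ≤ (Finset.range k).sup b := Finset.le_sup (Finset.mem_range.mpr hi)
              _ ≤ n := le_max_right _ _
          · exact Set.mem_iInter.mp (hbK k) n
      refine ⟨b, hpre, ?_⟩
      rw [hrange]
      exact hK
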